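/- Cut admissibility for atomic derivability: for atomic multisets P = {p_1,…,p_n} and S, atom q, and base B, the following are equivalent: (1) P ⊎ S ⊢_B q; (2) for every base C ⊇ B and all atomic multisets T_1,…,T_n with T_i ⊢_C p_i for each i, it holds that T_1 ⊎ … ⊎ T_n ⊎ S ⊢_C q. -/
import Mathlib


abbrev Atom := ℕ
abbrev ASeq := Multiset Atom × Atom
abbrev Box := Multiset ASeq
abbrev ARule := Multiset Box × Box × Atom
abbrev Base := Set ARule

/-- An atom `d` is persistent in `B` if there is a rule `⟨∅, S, d⟩ ∈ B` with `S` nonempty. -/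
def Persistent (B : Base) (d : Atom) : Prop :=
  ∃ S : Box, S ≠ 0 ∧ ((0 : Multiset Box), S, d) ∈ B

/-- Atomic derivability in a base. -/
inductive Deriv (B : Base) : Multiset Atom → Atom → Prop
  | ref (p : Atom) : Deriv B {p} p
  | app (S : Box) (p : Atom)
      (bc : List (Box × Multiset Atom))
      (dc : List (Atom × Multiset Atom))
      (hrule : ((↑(bc.map Prod.fst) : Multiset Box), S, p) ∈ B)
      (hpers : ∀ x ∈ dc, Persistent B x.1)
      (hbox : ∀ x ∈ bc, ∀ s ∈ x.1, Deriv B (x.2 + s.1) s.2)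
      (hd : ∀ x ∈ dc, Deriv B x.2 x.1)
      (hS : ∀ s ∈ S, Deriv B ((↑(dc.map Prod.fst) : Multiset Atom) + s.1) s.2) :
      Deriv B ((bc.map Prod.snd).sum + (dc.map Prod.snd).sum) p


lemma Deriv.mono {B C : Base} (hBC : B ⊆ C) {Γ : Multiset Atom} {q : Atom}
    (h : Deriv B Γ q) : Deriv C Γ q := by
  induction h with
  | ref p => exact Deriv.ref p
  | app S p bc dc hrule hpers hbox hd hS ihbox ihd ihS =>
    exact Deriv.app S p bc dc (hBC hrule)
      (fun x hx => (hpers x hx).imp fun S' h' => ⟨h'.1, hBC h'.2⟩)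
      (fun x hx s hs => ihbox x hx s hs)
      (fun x hx => ihd x hx)
      (fun s hs => ihS s hs)

lemma split_of_mem {α : Type} (l : List (α × Multiset Atom)) {p : Atom}
    (h : p ∈ (l.map Prod.snd).sum) :
    ∃ l₁ x l₂, l = l₁ ++ x :: l₂ ∧ p ∈ x.2 := by
  induction l with
  | nil => simp at h
  | cons a l ih =>
    simp only [List.map_cons, List.sum_cons, Multiset.mem_add] at h
    rcases h with h | h
    · exact ⟨[], a, l, rfl, h⟩
    · obtain ⟨l₁, x, l₂, rfl, hp⟩ := ih h
      exact ⟨a :: l₁, x, l₂, rfl, hp⟩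

lemma Deriv.cut {C : Base} {T : Multiset Atom} {p : Atom} (hT : Deriv C T p)
    {Δ : Multiset Atom} {q : Atom} (h : Deriv C Δ q) :
    ∀ Γ : Multiset Atom, Δ = p ::ₘ Γ → Deriv C (T + Γ) q := by
  induction h with
  | ref r =>
    intro Γ hΓ
    have hcard := congrArg Multiset.card hΓ
    simp at hcard
    have hΓ0 : Γ = 0 := hcard
    subst hΓ0
    simp only [Multiset.cons_zero, Multiset.singleton_inj] at hΓ
    subst hΓ
    simpa using hT
  | app S p' bc dc hrule hpers hbox hd hS ihbox ihd ihS =>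
    intro Γ hΓ
    have hmem : p ∈ (bc.map Prod.snd).sum + (dc.map Prod.snd).sum := by
      rw [hΓ]; exact Multiset.mem_cons_self p Γ
    rcases Multiset.mem_add.mp hmem with hm | hm
    · obtain ⟨l₁, x, l₂, rfl, hp⟩ := split_of_mem bc hm
      have hpe : p ::ₘ x.2.erase p = x.2 := Multiset.cons_erase hp
      have hctx : T + Γ =
          (((l₁ ++ (x.1, T + x.2.erase p) :: l₂).map Prod.snd).sum + (dc.map Prod.snd).sum) := by
        simp only [List.map_append, List.map_cons, List.sum_append, List.sum_cons] at hΓ ⊢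
        ext a
        have h2 := congrArg (Multiset.count a) hΓ
        by_cases ha : a = p
        · subst ha
          have hp1 : 1 ≤ Multiset.count a x.2 := Multiset.one_le_count_iff_mem.mpr hp
          simp [Multiset.count_erase_self] at h2 ⊢
          omega
        · simp [Multiset.count_cons_of_ne ha, Multiset.count_erase_of_ne ha] at h2 ⊢
          omega
      rw [hctx]
      refine Deriv.app S p' (l₁ ++ (x.1, T + x.2.erase p) :: l₂) dc ?_ hpers ?_ hd hS
      · have : (l₁ ++ (x.1, T + x.2.erase p) :: l₂).map Prod.fst
            = (l₁ ++ x :: l₂).map Prod.fst := by simp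
        rw [this]; exact hrule
      · intro y hy s hs
        rcases List.mem_append.mp hy with hy | hy
        · exact hbox y (List.mem_append_left _ hy) s hs
        · rcases List.mem_cons.mp hy with rfl | hy
          · have heq : x.2 + s.1 = p ::ₘ (x.2.erase p + s.1) := by
              rw [← Multiset.cons_add, hpe]
            have := ihbox x (by simp) s hs (x.2.erase p + s.1) heq
            simpa [add_assoc] using this
          · exact hbox y (by simp [hy]) s hs
    · obtain ⟨l₁, x, l₂, rfl, hp⟩ := split_of_mem dc hm
      have hpe : p ::ₘ x.2.erase p = x.2 := Multiset.cons_erase hp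
      have hctx : T + Γ =
          ((bc.map Prod.snd).sum + ((l₁ ++ (x.1, T + x.2.erase p) :: l₂).map Prod.snd).sum) := by
        simp only [List.map_append, List.map_cons, List.sum_append, List.sum_cons] at hΓ ⊢
        ext a
        have h2 := congrArg (Multiset.count a) hΓ
        by_cases ha : a = p
        · subst ha
          have hp1 : 1 ≤ Multiset.count a x.2 := Multiset.one_le_count_iff_mem.mpr hp
          simp [Multiset.count_erase_self] at h2 ⊢
          omega
        · simp [Multiset.count_cons_of_ne ha, Multiset.count_erase_of_ne ha] at h2 ⊢
          omega
      have hfst : (l₁ ++ (x.1, T + x.2.erase p) :: l₂).map Prod.fst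
          = (l₁ ++ x :: l₂).map Prod.fst := by simp
      rw [hctx]
      refine Deriv.app S p' bc (l₁ ++ (x.1, T + x.2.erase p) :: l₂) hrule ?_ hbox ?_ ?_
      · intro y hy
        rcases List.mem_append.mp hy with hy | hy
        · exact hpers y (List.mem_append_left _ hy)
        · rcases List.mem_cons.mp hy with rfl | hy
          · exact hpers x (by simp)
          · exact hpers y (by simp [hy])
      · intro y hy
        rcases List.mem_append.mp hy with hy | hy
        · exact hd y (List.mem_append_left _ hy)
        · rcases List.mem_cons.mp hy with rfl | hy
          · exact ihd x (by simp) (x.2.erase p) hpe.symm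
          · exact hd y (by simp [hy])
      · intro s hs
        rw [hfst]
        exact hS s hs

lemma Deriv.subst {C : Base} {Ts : List (Multiset Atom)} {ps : List Atom}
    (hF : List.Forall₂ (fun T p => Deriv C T p) Ts ps) :
    ∀ S q, Deriv C ((↑ps : Multiset Atom) + S) q → Deriv C (Ts.sum + S) q := by
  induction hF with
  | nil => intro S q h; simpa using h
  | @cons T p Ts ps hTp hF ih =>
    intro S q h
    have h1 : Deriv C ((↑ps : Multiset Atom) + (p ::ₘ S)) q := by
      have heq : (↑(p :: ps) : Multiset Atom) + S = ↑ps + (p ::ₘ S) := by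
        simp only [← Multiset.cons_coe, ← Multiset.singleton_add]; abel
      rwa [heq] at h
    have h2 := ih (p ::ₘ S) q h1
    have h3 := Deriv.cut hTp h2 (Ts.sum + S) (by
      simp only [← Multiset.singleton_add]; abel)
    simpa [add_assoc] using h3

lemma forall₂_singletons (B : Base) (ps : List Atom) :
    List.Forall₂ (fun T p => Deriv B T p) (ps.map fun p => ({p} : Multiset Atom)) ps := by
  induction ps with
  | nil => exact List.Forall₂.nil
  | cons p ps ih => exact List.Forall₂.cons (Deriv.ref p) ih

lemma sum_singletons (ps : List Atom) :
    (ps.map fun p => ({p} : Multiset Atom)).sum = (↑ps : Multiset Atom) := by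
  induction ps with
  | nil => simp
  | cons p ps ih => simp [ih, ← Multiset.cons_coe, Multiset.singleton_add]

theorem atomic_cut_admissibility (B : Base) (ps : List Atom) (S : Multiset Atom) (q : Atom) :
    Deriv B ((↑ps : Multiset Atom) + S) q ↔
      ∀ C : Base, B ⊆ C → ∀ Ts : List (Multiset Atom),
        List.Forall₂ (fun T p => Deriv C T p) Ts ps →
        Deriv C (Ts.sum + S) q := by
  constructor
  · intro h C hBC Ts hF
    exact Deriv.subst hF S q (Deriv.mono hBC h)
  · intro h
    have := h B (subset_refl B) _ (forall₂_singletons B ps)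
    rwa [sum_singletons ps] at this
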